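/- If β ≠ 0, then M_{0,α,β} is an irreducible conformal module over the Heisenberg-Virasoro conformal algebra: its only conformal submodules are 0 and itself. -/
import Mathlib


open Polynomial

/- The rank-one conformal module M_{0,α,β} = ℂ[∂]v over the Heisenberg-Virasoro
conformal algebra is identified with ℂ[X] (X = ∂); with λ the outer variable of
ℂ[∂][λ], the actions are L_λ(f(∂)v) = (∂+α) f(∂+λ) v, H_λ(f(∂)v) = β f(∂+λ) v. -/

/-- Substitution f(∂) ↦ f(∂+λ) in ℂ[∂][λ]. -/
noncomputable def shP (f : Polynomial ℂ) : Polynomial (Polynomial ℂ) :=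
  Polynomial.aeval (Polynomial.C Polynomial.X + Polynomial.X) f

/-- λ-action of L on M_{0,α,β}: L_λ(f(∂)v) = (∂ + α) f(∂+λ) v. -/
noncomputable def LA (α : ℂ) (f : Polynomial ℂ) : Polynomial (Polynomial ℂ) :=
  Polynomial.C (Polynomial.X + Polynomial.C α) * shP f

/-- λ-action of H on M_{0,α,β}: H_λ(f(∂)v) = β f(∂+λ) v. -/
noncomputable def HA (β : ℂ) (f : Polynomial ℂ) : Polynomial (Polynomial ℂ) :=
  Polynomial.C (Polynomial.C β) * shP f

lemma shP_eq (f : Polynomial ℂ) :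
    shP f = (f.map (C : ℂ →+* Polynomial ℂ)).comp (C X + X) := by
  simp [shP, aeval_def, eval₂_map, Polynomial.comp]
  rfl

/-- The top λ-coefficient of f(∂+λ) is the leading coefficient of f. -/
lemma shP_coeff_top (f : Polynomial ℂ) (hf : f ≠ 0) :
    (shP f).coeff f.natDegree = C f.leadingCoeff := by
  rw [shP_eq]
  have hC : Function.Injective (C : ℂ →+* Polynomial ℂ) := C_injective
  have hq : (C (X : Polynomial ℂ) + X) = X + C X := add_comm _ _
  rw [hq]
  have hnd : ((f.map (C : ℂ →+* Polynomial ℂ)).comp (X + C X)).natDegree = f.natDegree := by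
    rw [natDegree_comp, natDegree_X_add_C, mul_one, natDegree_map_eq_of_injective hC]
  have hlc : ((f.map (C : ℂ →+* Polynomial ℂ)).comp (X + C X)).leadingCoeff
      = C f.leadingCoeff := by
    rw [leadingCoeff_comp (by rw [natDegree_X_add_C]; norm_num),
      (monic_X_add_C (X : Polynomial ℂ)).leadingCoeff, one_pow, mul_one,
      leadingCoeff_map_of_leadingCoeff_ne_zero]
    simpa using leadingCoeff_ne_zero.2 hf
  rw [← hnd]
  exact hlc

/- If β ≠ 0, then M_{0,α,β} is an irreducible conformal module over the
Heisenberg-Virasoro conformal algebra: its only conformal submodules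
(ℂ[∂]-submodules closed under all coefficients of the λ-actions) are 0 and
itself. -/
theorem M_zero_alpha_beta_irreducible (α β : ℂ) (hβ : β ≠ 0) :
    ∀ W : Submodule (Polynomial ℂ) (Polynomial ℂ),
      (∀ f ∈ W, ∀ j : ℕ, (LA α f).coeff j ∈ W ∧ (HA β f).coeff j ∈ W) →
      W = ⊥ ∨ W = ⊤ := by
  intro W hW
  by_cases hbot : W = ⊥
  · exact Or.inl hbot
  · right
    -- pick a nonzero f ∈ W
    obtain ⟨f, hfW, hf0⟩ : ∃ f ∈ W, f ≠ 0 := by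
      by_contra h
      push_neg at h
      exact hbot (Submodule.eq_bot_iff W |>.2 h)
    -- the top λ-coefficient of H_λ f is the nonzero constant β · lc(f)
    have hcoeff : (HA β f).coeff f.natDegree = C (β * f.leadingCoeff) := by
      rw [HA, coeff_C_mul, shP_coeff_top f hf0, ← C_mul]
    have hmem : C (β * f.leadingCoeff) ∈ W := by
      rw [← hcoeff]; exact (hW f hfW f.natDegree).2
    have hne : β * f.leadingCoeff ≠ 0 :=
      mul_ne_zero hβ (leadingCoeff_ne_zero.2 hf0)
    -- a nonzero constant generates everything
    rw [Submodule.eq_top_iff']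
    intro g
    have : (C (β * f.leadingCoeff)⁻¹ * g) • C (β * f.leadingCoeff) ∈ W :=
      W.smul_mem _ hmem
    have heq : (C (β * f.leadingCoeff)⁻¹ * g) • C (β * f.leadingCoeff) = g := by
      rw [smul_eq_mul, mul_comm, ← mul_assoc, ← C_mul, mul_inv_cancel₀ hne, C_1, one_mul]
    rwa [heq] at this
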